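/- For all words u, v over a nonempty finite alphabet A and all letters a, b: r(u·a·v, b) ≤ 1 + r(u·v, b) and ℓ(b, u·a·v) ≤ 1 + ℓ(b, u·v). -/

import Mathlib

/-- Simon's congruence of order `k`: `u` and `v` have the same subwords
(subsequences) of length at most `k`. -/
def SimonCong {A : Type*} (k : ℕ) (u v : List A) : Prop :=
  ∀ s : List A, s.length ≤ k → (s.Sublist u ↔ s.Sublist v)

/-- The subword distance `δ(u,v) = sup {k | u ∼ₖ v} ∈ ℕ ∪ {∞}`. -/
noncomputable def delta {A : Type*} (u v : List A) : ℕ∞ :=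
  ⨆ k ∈ {k : ℕ | SimonCong k u v}, (k : ℕ∞)

/-- Right side distance `r(u,t) = δ(u, u·t)`. -/
noncomputable def sideR {A : Type*} (u t : List A) : ℕ∞ :=
  delta u (u ++ t)

/-- Left side distance `ℓ(t,u) = δ(t·u, u)`. -/
noncomputable def sideL {A : Type*} (t u : List A) : ℕ∞ :=
  delta (t ++ u) u

/-- The piecewise complexity `h(u)`: the least `n` such that every word
`v` with `u ∼ₙ v` equals `u`. -/
noncomputable def pieceH {A : Type*} (u : List A) : ℕ :=
  sInf {n : ℕ | ∀ v : List A, SimonCong n u v → v = u}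

/-- A word `u` is `m`-reduced if no strict subword of `u` is `∼ₘ`-equivalent to `u`. -/
def MReduced {A : Type*} (m : ℕ) (u : List A) : Prop :=
  ∀ u' : List A, u'.Sublist u → u' ≠ u → ¬ SimonCong m u' u

/-- The piecewise minimality index `ρ(u)`: the least `m` such that `u` is `m`-reduced. -/
noncomputable def rho {A : Type*} (u : List A) : ℕ :=
  sInf {m : ℕ | MReduced m u}

open List in
lemma core_lemma {A : Type*} {u v : List A} {a b : A} {m : ℕ}
    (H : SimonCong (m + 1) (u ++ a :: v) ((u ++ a :: v) ++ [b])) :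
    SimonCong m (u ++ v) ((u ++ v) ++ [b]) := by
  classical
  intro s hs
  constructor
  · exact fun h => h.trans (sublist_append_left _ _)
  intro hsub
  obtain ⟨t1, t2, hst, h1, h2⟩ := sublist_append_iff.mp hsub
  rcases sublist_cons_iff.mp h2 with h2' | ⟨r, hr, hr'⟩
  · rw [sublist_nil.mp h2'] at hst
    rw [hst, append_nil]; exact h1
  obtain rfl : t2 = [b] := by simp [hr, sublist_nil.mp hr']
  set P : ℕ → Prop := fun n => (t1.take n).Sublist u with hPdef
  set n := Nat.findGreatest P t1.length with hndef
  have hPn : P n := Nat.findGreatest_spec (Nat.zero_le _) (by simp [hPdef])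
  have hnle : n ≤ t1.length := Nat.findGreatest_le _
  obtain ⟨p1, p2, he, hp1, hp2⟩ := sublist_append_iff.mp h1
  have hple : p1.length ≤ n := by
    by_contra hc
    push_neg at hc
    refine Nat.findGreatest_is_greatest hc (by rw [he]; simp) ?_
    show (t1.take p1.length).Sublist u
    rw [he, take_left]; exact hp1
  have hs2 : (t1.drop n).Sublist v := by
    have h' : ∀ j, t1.drop (p1.length + j) = p2.drop j := fun j => by rw [he, drop_append]; simp
    have h'' := h' (n - p1.length)
    rw [Nat.add_sub_cancel' hple] at h''
    rw [h'']
    exact (drop_sublist _ _).trans hp2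
  have hlen1 : (t1.take n).length = n := by rw [length_take]; omega
  set ts := t1.take n ++ a :: (t1.drop n ++ [b]) with htsdef
  have hts_len : ts.length ≤ m + 1 := by
    have hslen : t1.length + 1 ≤ m := by
      have := hst ▸ hs; simpa using this
    have : ts.length = t1.length + 2 := by
      simp [htsdef]; omega
    omega
  have hts : ts.Sublist (u ++ a :: v) := by
    refine (H ts hts_len).mpr ?_
    have e : (u ++ a :: v) ++ [b] = u ++ a :: (v ++ [b]) := by simp
    rw [e]
    exact Sublist.append hPn ((hs2.append (Sublist.refl [b])).cons₂ a)
  obtain ⟨w1, w2, hw, hw1, hw2⟩ := sublist_append_iff.mp hts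
  have goal_eq : s = t1.take n ++ (t1.drop n ++ [b]) := by
    rw [hst, ← append_assoc, take_append_drop]
  rw [goal_eq]
  rcases le_or_gt w1.length n with hcase | hcase
  · have e1 : ts.drop n = a :: (t1.drop n ++ [b]) := by
      have h0 := drop_left (l₁ := t1.take n) (l₂ := a :: (t1.drop n ++ [b]))
      rw [hlen1] at h0
      rw [htsdef]; exact h0
    have e2 : ts.drop n = w2.drop (n - w1.length) := by
      conv_lhs => rw [hw, show n = w1.length + (n - w1.length) by omega]
      rw [← drop_drop, drop_left]
    have h5 : (a :: (t1.drop n ++ [b])).Sublist (a :: v) := by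
      rw [← e1, e2]
      exact (drop_sublist _ _).trans hw2
    exact Sublist.append hPn (cons_sublist_cons.mp h5)
  · have hw2eq : w2 = ts.drop w1.length := by rw [hw, drop_left]
    have hA : (t1.take n ++ [a]).Sublist u := by
      have e3 : ts.take (n+1) = t1.take n ++ [a] := by
        rw [htsdef, show n + 1 = (t1.take n).length + 1 by omega, take_append]
        simp
      have e4 : ts.take (n+1) = w1.take (n+1) := by
        rw [hw, take_append, show n+1 - w1.length = 0 by omega]
        simp
      have : (t1.take n ++ [a]).Sublist w1 := by
        rw [← e3, e4]; exact take_sublist _ _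
      exact this.trans hw1
    rcases e5 : t1.drop n with _ | ⟨c, s2'⟩
    · -- drop n t1 = []
      rcases Nat.lt_or_ge w1.length (n+2) with hk | hk
      · have hw1len : w1.length = n + 1 := by omega
        have e6 : w2 = [b] := by
          rw [hw2eq, hw1len, htsdef, show n + 1 = (t1.take n).length + 1 by omega,
            drop_append]
          simp [e5]
        rw [e6] at hw2
        rcases sublist_cons_iff.mp hw2 with hbv | ⟨r2, hr2, hr2'⟩
        · exact Sublist.append hPn (by simpa [e5] using hbv)
        · injection hr2 with hba hrr
          subst hba
          simpa using hA.trans (sublist_append_left u v)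
      · have htslen : ts.length = n + 2 := by
          simp [htsdef, e5]; omega
        have hw1eq : w1 = ts := by
          have : w1 = ts.take w1.length := by rw [hw, take_left]
          rw [this, take_of_length_le (by omega)]
        have hts2 : ts = t1.take n ++ a :: ([] ++ [b]) := by rw [htsdef, e5]
        have h10 : (t1.take n ++ ([] ++ [b])).Sublist ts := by
          rw [hts2]
          exact Sublist.append (Sublist.refl _) (sublist_cons_self _ _)
        exact (h10.trans (hw1eq ▸ hw1)).trans (sublist_append_left u v)
    · -- drop n t1 = c :: s2'
      have hlt : n + 1 ≤ t1.length := by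
        have := congrArg length e5
        simp at this
        omega
      have hkey : ¬ (t1.take n ++ [c]).Sublist u := by
        intro hcu
        have et : t1 = t1.take n ++ c :: s2' := by rw [← e5, take_append_drop]
        have hP1 : P (n+1) := by
          show (t1.take (n+1)).Sublist u
          have e7 : t1.take (n+1) = t1.take n ++ [c] := by
            calc t1.take (n+1) = (t1.take n ++ c :: s2').take ((t1.take n).length + 1) := by
                  rw [← et, hlen1]
              _ = t1.take n ++ [c] := by rw [take_append]; simp
          rw [e7]; exact hcu
        exact Nat.findGreatest_is_greatest (by omega) hlt hP1
      rcases Nat.lt_or_ge w1.length (n+2) with hk | hk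
      · have hw1len : w1.length = n + 1 := by omega
        have e6 : w2 = c :: (s2' ++ [b]) := by
          rw [hw2eq, hw1len, htsdef, show n + 1 = (t1.take n).length + 1 by omega,
            drop_append]
          simp [e5]
        rw [e6] at hw2
        rcases sublist_cons_iff.mp hw2 with hcv | ⟨r2, hr2, hr2'⟩
        · refine Sublist.append hPn ?_
          simpa using hcv
        · injection hr2 with hca hrr
          subst hca
          exact absurd hA hkey
      · have e7 : ts.take (n+2) = t1.take n ++ [a, c] := by
          rw [htsdef, show n + 2 = (t1.take n).length + 2 by omega, take_append]
          simp [e5]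
        have e8 : ts.take (n+2) = w1.take (n+2) := by
          rw [hw, take_append, show n+2 - w1.length = 0 by omega]
          simp
        have h9 : (t1.take n ++ [a, c]).Sublist u := by
          rw [← e7, e8]; exact (take_sublist _ _).trans hw1
        refine absurd (Sublist.trans ?_ h9) hkey
        exact Sublist.append (Sublist.refl _) (sublist_cons_self _ _)

open List in
lemma simonCong_reverse' {A : Type*} {k : ℕ} {u v : List A} (h : SimonCong k u v) :
    SimonCong k u.reverse v.reverse := by
  have key : ∀ (s w : List A), s.Sublist w.reverse ↔ s.reverse.Sublist w := by
    intro s w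
    rw [← List.reverse_sublist, List.reverse_reverse]
  intro s hs
  rw [key, key]
  exact h s.reverse (by simpa using hs)

lemma le_delta {A : Type*} {u v : List A} {k : ℕ} (h : SimonCong k u v) :
    (k : ℕ∞) ≤ delta u v :=
  le_iSup₂ (f := fun (k : ℕ) (_ : k ∈ {k : ℕ | SimonCong k u v}) => (k : ℕ∞)) k h

lemma delta_mono {A : Type*} {u v u' v' : List A}
    (h : ∀ k, SimonCong k u v → SimonCong k u' v') : delta u v ≤ delta u' v' :=
  iSup₂_le fun k hk => le_delta (h k hk)

lemma delta_comm {A : Type*} (u v : List A) : delta u v = delta v u :=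
  le_antisymm (delta_mono fun _ h s hs => (h s hs).symm)
    (delta_mono fun _ h s hs => (h s hs).symm)

lemma delta_rev {A : Type*} (u v : List A) : delta u.reverse v.reverse = delta u v := by
  refine le_antisymm (delta_mono fun k h => ?_) (delta_mono fun k h => simonCong_reverse' h)
  simpa using simonCong_reverse' h

lemma sideL_eq_sideR {A : Type*} (b : A) (w : List A) :
    sideL [b] w = sideR w.reverse [b] := by
  rw [sideL, sideR]
  calc delta ([b] ++ w) w = delta (([b] ++ w).reverse) w.reverse := (delta_rev _ _).symm
    _ = delta (w.reverse ++ [b]) w.reverse := by simp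
    _ = delta w.reverse (w.reverse ++ [b]) := delta_comm _ _

lemma sideR_step {A : Type*} (u v : List A) (a b : A) :
    sideR (u ++ a :: v) [b] ≤ 1 + sideR (u ++ v) [b] := by
  rw [sideR, delta]
  apply iSup₂_le
  intro k hk
  match k with
  | 0 => exact zero_le
  | (m+1) =>
    have hc : SimonCong m (u ++ v) ((u ++ v) ++ [b]) := core_lemma hk
    calc ((m+1 : ℕ) : ℕ∞) = 1 + (m : ℕ∞) := by push_cast; ring
      _ ≤ 1 + sideR (u ++ v) [b] := add_le_add_right (le_delta hc) 1

theorem stmt8 {A : Type*} [Fintype A] [Nonempty A] (u v : List A) (a b : A) :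
    sideR (u ++ a :: v) [b] ≤ 1 + sideR (u ++ v) [b] ∧
    sideL [b] (u ++ a :: v) ≤ 1 + sideL [b] (u ++ v) := by
  refine ⟨sideR_step u v a b, ?_⟩
  have h1 : sideL [b] (u ++ a :: v) = sideR (v.reverse ++ a :: u.reverse) [b] := by
    rw [sideL_eq_sideR]
    congr 1
    simp
  have h2 : sideL [b] (u ++ v) = sideR (v.reverse ++ u.reverse) [b] := by
    rw [sideL_eq_sideR]
    congr 1
    simp
  rw [h1, h2]
  exact sideR_step _ _ a b
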